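/- Let A, B be computable well-orderings of ℕ and let f be a computable reduction from E_min(A) to E_min(B) that is well-defined on c.e. sets. If min_A(W_e) ≤_A min_A(W_i), then min_B(W_{f(e)}) ≤_B min_B(W_{f(i)}). -/

import Mathlib

/-- The `e`-th computably enumerable set of natural numbers: the domain of the
`e`-th partial computable function. -/
def Wce (e : ℕ) : Set ℕ :=
  {x | ((Denumerable.ofNat Nat.Partrec.Code e).eval x).Dom}


/-- A computable well-ordering of ℕ: a computable (Bool-valued) binary relation
whose associated strict relation is a well-order on ℕ. -/
structure CompWO where
  r : ℕ → ℕ → Bool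
  comp : Computable₂ r
  wo : IsWellOrder ℕ (fun a b => r a b = true)

/-- `m` is the `A`-least element of `S`. -/
def IsMinOf (A : CompWO) (S : Set ℕ) (m : ℕ) : Prop :=
  m ∈ S ∧ ∀ x ∈ S, A.r x m = false

/-- The equivalence relation `E_min(A)` on indices of c.e. sets: `W_e` and `W_i`
have the same `A`-least element, or are both empty. -/
def Emin (A : CompWO) (e i : ℕ) : Prop :=
  (Wce e = ∅ ∧ Wce i = ∅) ∨ ∃ m, IsMinOf A (Wce e) m ∧ IsMinOf A (Wce i) m

/-- Computable reducibility of binary relations on ℕ. -/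
def CompReducible (E F : ℕ → ℕ → Prop) : Prop :=
  ∃ h : ℕ → ℕ, Computable h ∧ ∀ x y, E x y ↔ F (h x) (h y)

/-- The order type of a computable well-ordering. -/
noncomputable def CompWO.otype (A : CompWO) : Ordinal :=
  @Ordinal.type ℕ (fun a b => A.r a b = true) A.wo

/-- The `A`-rank of an element: the order type of its set of predecessors. -/
noncomputable def CompWO.rank (A : CompWO) (a : ℕ) : Ordinal :=
  @Ordinal.typein ℕ (fun a b => A.r a b = true) A.wo a

namespace Stmt5Aux

open Nat.Partrec (Code)
open Nat.Partrec.Code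
open Encodable (encode)

lemma mem_wce {e x : ℕ} : x ∈ Wce e ↔ ((Denumerable.ofNat Code e).eval x).Dom := Iff.rfl

lemma dom_iff_evaln {c : Code} {x : ℕ} :
    (eval c x).Dom ↔ ∃ k, (evaln k c x).isSome := by
  constructor
  · intro h
    obtain ⟨v, hv⟩ := Part.dom_iff_mem.1 h
    obtain ⟨k, hk⟩ := evaln_complete.1 hv
    exact ⟨k, Option.isSome_iff_exists.2 ⟨v, hk⟩⟩
  · rintro ⟨k, hk⟩
    obtain ⟨v, hv⟩ := Option.isSome_iff_exists.1 hk
    exact Part.dom_iff_mem.2 ⟨v, evaln_complete.2 ⟨k, hv⟩⟩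

lemma evaln_isSome_mono {k k' : ℕ} {c : Code} {x : ℕ} (h : k ≤ k')
    (hk : (evaln k c x).isSome) : (evaln k' c x).isSome := by
  obtain ⟨v, hv⟩ := Option.isSome_iff_exists.1 hk
  exact Option.isSome_iff_exists.2 ⟨v, evaln_mono h hv⟩

lemma rfind_some_dom {q : ℕ → Bool} :
    (Nat.rfind fun j => (Part.some (q j) : Part Bool)).Dom ↔ ∃ j, q j = true := by
  refine Nat.rfind_dom.trans ?_
  constructor
  · rintro ⟨n, h, _⟩; exact ⟨n, (Part.mem_some_iff.1 h).symm⟩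
  · rintro ⟨j, h⟩; exact ⟨j, Part.mem_some_iff.2 h.symm, fun {_} _ => trivial⟩

/-- A uniformly r.e. predicate: existence of an element of `Wce (h a)` satisfying a
computable test. -/
lemma rePred_exists {α} [Primcodable α] (h : α → ℕ) (hh : Computable h)
    (p : α → ℕ → Bool) (hp : Computable₂ p) :
    REPred fun a => ∃ y, y ∈ Wce (h a) ∧ p a y = true := by
  classical
  set q : α × ℕ → Bool := fun z =>
    ((evaln z.2.unpair.1 (Denumerable.ofNat Code (h z.1)) z.2.unpair.2).isSome
      && p z.1 z.2.unpair.2) with hqdef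
  have hu1 : Computable fun z : α × ℕ => z.2.unpair.1 :=
    (Primrec.fst.comp (Primrec.unpair.comp Primrec.snd)).to_comp
  have hu2 : Computable fun z : α × ℕ => z.2.unpair.2 :=
    (Primrec.snd.comp (Primrec.unpair.comp Primrec.snd)).to_comp
  have hcode : Computable fun z : α × ℕ => Denumerable.ofNat Code (h z.1) :=
    (Computable.ofNat Code).comp (hh.comp Computable.fst)
  have hev : Computable fun z : α × ℕ =>
      evaln z.2.unpair.1 (Denumerable.ofNat Code (h z.1)) z.2.unpair.2 :=
    primrec_evaln.to_comp.comp ((hu1.pair hcode).pair hu2)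
  have hb1 : Computable fun z : α × ℕ =>
      (evaln z.2.unpair.1 (Denumerable.ofNat Code (h z.1)) z.2.unpair.2).isSome :=
    Primrec.option_isSome.to_comp.comp hev
  have hb2 : Computable fun z : α × ℕ => p z.1 z.2.unpair.2 :=
    hp.comp Computable.fst hu2
  have hq : Computable q := by
    refine (Computable.cond hb1 hb2 (Computable.const false)).of_eq fun z => ?_
    cases hb : (evaln z.2.unpair.1 (Denumerable.ofNat Code (h z.1)) z.2.unpair.2).isSome <;>
      simp [hqdef, hb]
  have hF : Partrec fun a : α => Nat.rfind fun j => (Part.some (q (a, j)) : Part Bool) :=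
    Partrec.rfind hq.to₂.partrec₂
  refine hF.dom_re.of_eq fun a => ?_
  rw [rfind_some_dom]
  constructor
  · rintro ⟨j, hj⟩
    rw [hqdef] at hj
    simp only [Bool.and_eq_true] at hj
    exact ⟨j.unpair.2, dom_iff_evaln.2 ⟨j.unpair.1, hj.1⟩, hj.2⟩
  · rintro ⟨y, hy, hpy⟩
    obtain ⟨k, hk⟩ := dom_iff_evaln.1 hy
    refine ⟨Nat.pair k y, ?_⟩
    simp [hqdef, Nat.unpair_pair, hk, hpy]

/-- The key s-m-n construction: a computable `g` with
`Wce (g c) = Wce s ∪ {x ∈ Wce t | c halts on 0}`. -/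
lemma exists_g (s t : ℕ) : ∃ g : Code → ℕ, Computable g ∧
    ∀ c : Code, Wce (g c) = Wce s ∪ {x | x ∈ Wce t ∧ (eval c 0).Dom} := by
  classical
  set cs := Denumerable.ofNat Code s with hcs
  set ct := Denumerable.ofNat Code t with hct
  set q : ℕ × ℕ → Bool := fun w =>
    ((evaln w.2 cs w.1.unpair.2).isSome
      || ((evaln w.2 ct w.1.unpair.2).isSome
        && (evaln w.2 (Denumerable.ofNat Code w.1.unpair.1) 0).isSome)) with hqdef
  have hx : Computable fun w : ℕ × ℕ => w.1.unpair.2 :=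
    (Primrec.snd.comp (Primrec.unpair.comp Primrec.fst)).to_comp
  have hn : Computable fun w : ℕ × ℕ => w.1.unpair.1 :=
    (Primrec.fst.comp (Primrec.unpair.comp Primrec.fst)).to_comp
  have he1 : Computable fun w : ℕ × ℕ => (evaln w.2 cs w.1.unpair.2).isSome :=
    Primrec.option_isSome.to_comp.comp
      (primrec_evaln.to_comp.comp ((Computable.snd.pair (Computable.const cs)).pair hx))
  have he2 : Computable fun w : ℕ × ℕ => (evaln w.2 ct w.1.unpair.2).isSome :=
    Primrec.option_isSome.to_comp.comp
      (primrec_evaln.to_comp.comp ((Computable.snd.pair (Computable.const ct)).pair hx))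
  have he3 : Computable fun w : ℕ × ℕ =>
      (evaln w.2 (Denumerable.ofNat Code w.1.unpair.1) 0).isSome :=
    Primrec.option_isSome.to_comp.comp
      (primrec_evaln.to_comp.comp
        ((Computable.snd.pair ((Computable.ofNat Code).comp hn)).pair (Computable.const 0)))
  have hq : Computable q := by
    refine (Computable.cond he1 (Computable.const true)
      (Computable.cond he2 he3 (Computable.const false))).of_eq fun w => ?_
    cases hb1 : (evaln w.2 cs w.1.unpair.2).isSome <;>
      cases hb2 : (evaln w.2 ct w.1.unpair.2).isSome <;>
        simp [hqdef, hb1, hb2]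
  have hF : Partrec fun z : ℕ =>
      ((Nat.rfind fun j => (Part.some (q (z, j)) : Part Bool)) : Part ℕ) :=
    Partrec.rfind hq.to₂.partrec₂
  obtain ⟨c0, hc0⟩ := exists_code.1 (Partrec.nat_iff.1 hF)
  obtain ⟨sm, hsm, hsme⟩ := smn
  refine ⟨fun c => encode (sm c0 (encode c)),
    Computable.encode.comp (hsm.comp (Computable.const c0) Computable.encode), fun c => ?_⟩
  ext x
  have hmem : x ∈ Wce (encode (sm c0 (encode c))) ↔
      ((Nat.rfind fun j =>
        (Part.some (q (Nat.pair (encode c) x, j)) : Part Bool)) : Part ℕ).Dom := by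
    rw [mem_wce, Denumerable.ofNat_encode, hsme, hc0]
  rw [hmem, rfind_some_dom]
  constructor
  · rintro ⟨j, hj⟩
    rw [hqdef] at hj
    simp only [Nat.unpair_pair, Denumerable.ofNat_encode, Bool.or_eq_true,
      Bool.and_eq_true] at hj
    rcases hj with hj | ⟨hj1, hj2⟩
    · exact Or.inl (dom_iff_evaln.2 ⟨j, hj⟩)
    · exact Or.inr ⟨dom_iff_evaln.2 ⟨j, hj1⟩, dom_iff_evaln.2 ⟨j, hj2⟩⟩
  · rintro (hx | ⟨hx1, hx2⟩)
    · obtain ⟨k, hk⟩ := dom_iff_evaln.1 hx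
      refine ⟨k, ?_⟩
      simp [hqdef, Nat.unpair_pair, hcs, hk]
    · obtain ⟨k1, hk1⟩ := dom_iff_evaln.1 hx1
      obtain ⟨k2, hk2⟩ := dom_iff_evaln.1 hx2
      refine ⟨max k1 k2, ?_⟩
      rw [hqdef]
      simp only [Nat.unpair_pair, Denumerable.ofNat_encode, Bool.or_eq_true,
        Bool.and_eq_true]
      exact Or.inr ⟨evaln_isSome_mono (le_max_left _ _) hk1,
        evaln_isSome_mono (le_max_right _ _) hk2⟩

lemma exists_empty_index : ∃ z : ℕ, Wce z = ∅ := by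
  obtain ⟨c, hc⟩ := exists_code.1 Nat.Partrec.none
  refine ⟨encode c, Set.eq_empty_iff_forall_notMem.2 fun x hx => ?_⟩
  have hd : ((Denumerable.ofNat Code (encode c)).eval x).Dom := hx
  rw [Denumerable.ofNat_encode, hc] at hd
  exact hd

lemma exists_singleton_index (m : ℕ) : ∃ z : ℕ, Wce z = {m} := by
  classical
  have hq : Computable fun x : ℕ => (decide (x = m)) :=
    (Primrec.eq.comp Primrec.id (Primrec.const m)).decide.to_comp
  have hF : Partrec fun x : ℕ =>
      ((Nat.rfind fun _ => (Part.some (decide (x = m)) : Part Bool)) : Part ℕ) :=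
    Partrec.rfind ((hq.comp Computable.fst).to₂).partrec₂
  obtain ⟨c, hc⟩ := exists_code.1 (Partrec.nat_iff.1 hF)
  refine ⟨encode c, ?_⟩
  ext x
  have hmem : x ∈ Wce (encode c) ↔
      ((Nat.rfind fun _ =>
        (Part.some (decide (x = m)) : Part Bool)) : Part ℕ).Dom := by
    rw [mem_wce, Denumerable.ofNat_encode, hc]
  rw [hmem, rfind_some_dom]
  simp

lemma exists_isMinOf (B : CompWO) {S : Set ℕ} (hS : S.Nonempty) : ∃ m, IsMinOf B S m := by
  obtain ⟨m, hm, hmin⟩ := B.wo.toIsWellFounded.wf.has_min S hS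
  exact ⟨m, hm, fun x hx => Bool.eq_false_iff.2 (hmin x hx)⟩

lemma isMinOf_unique {B : CompWO} {S : Set ℕ} {m1 m2 : ℕ}
    (h1 : IsMinOf B S m1) (h2 : IsMinOf B S m2) : m1 = m2 := by
  haveI := B.wo
  rcases trichotomous_of (fun a b => B.r a b = true) m1 m2 with h | h | h
  · rw [h2.2 m1 h1.1] at h; exact absurd h (by simp)
  · exact h
  · rw [h1.2 m2 h2.1] at h; exact absurd h (by simp)

/-- Step A: the image of an index of a nonempty c.e. set is an index of a nonempty set. -/
lemma wce_f_nonempty (A B : CompWO) (f : ℕ → ℕ) (hf : Computable f)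
    (hred : ∀ x y, Emin A x y ↔ Emin B (f x) (f y))
    (hwd : ∀ e i, Wce e = Wce i → Wce (f e) = Wce (f i))
    (e m : ℕ) (hm : IsMinOf A (Wce e) m) : Wce (f e) ≠ ∅ := by
  haveI := A.wo
  intro hFE
  obtain ⟨z, hz⟩ := exists_empty_index
  have hAez : ¬ Emin A e z := by
    rintro (⟨h1, _⟩ | ⟨n, _, hn2⟩)
    · rw [h1] at hm; exact hm.1
    · rw [hz] at hn2; exact hn2.1
  have hBez : ¬ Emin B (f e) (f z) := fun h => hAez ((hred e z).2 h)
  have hfz : Wce (f z) ≠ ∅ := fun h => hBez (Or.inl ⟨hFE, h⟩)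
  obtain ⟨k0, hk0⟩ := Set.nonempty_iff_ne_empty.2 hfz
  obtain ⟨zm, hzm⟩ := exists_singleton_index m
  obtain ⟨g, hg, hgW⟩ := exists_g z zm
  have key : ∀ c : Code,
      (¬ (eval c 0).Dom) ↔ ∃ y, y ∈ Wce (f (g c)) ∧ (fun (_ : Code) (_ : ℕ) => true) c y = true := by
    intro c
    by_cases hdom : (eval c 0).Dom
    · -- Wce (g c) = {m}, so f (g c) indexes the empty set
      have hminGc : IsMinOf A (Wce (g c)) m := by
        constructor
        · rw [hgW]
          exact Or.inr ⟨by rw [hzm]; rfl, hdom⟩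
        · intro x hxm
          rw [hgW] at hxm
          rcases hxm with hxm | hxm
          · rw [hz] at hxm; exact hxm.elim
          · have hx : x = m := by rw [hzm] at hxm; exact hxm.1
            subst hx
            exact Bool.eq_false_iff.2 (irrefl_of (fun a b => A.r a b = true) x)
      have hB : Emin B (f (g c)) (f e) := (hred (g c) e).1 (Or.inr ⟨m, hminGc, hm⟩)
      have hempty : Wce (f (g c)) = ∅ := by
        rcases hB with ⟨h1, _⟩ | ⟨n, _, hn2⟩
        · exact h1
        · rw [hFE] at hn2; exact hn2.1.elim
      constructor
      · intro h; exact absurd hdom h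
      · rintro ⟨y, hy, _⟩
        rw [hempty] at hy; exact hy.elim
    · -- Wce (g c) = Wce z = ∅, so Wce (f (g c)) = Wce (f z) is nonempty
      have hgz : Wce (g c) = Wce z := by
        rw [hgW, hz]
        ext x
        simp [hdom]
      have hWfgc : Wce (f (g c)) = Wce (f z) := hwd (g c) z hgz
      exact ⟨fun _ => ⟨k0, by rw [hWfgc]; exact hk0, rfl⟩, fun _ => hdom⟩
  have hre : REPred fun c : Code =>
      ∃ y, y ∈ Wce ((fun c => f (g c)) c) ∧ (fun (_ : Code) (_ : ℕ) => true) c y = true :=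
    rePred_exists _ (hf.comp hg) _ ((Computable.const true).to₂)
  have hcompl : REPred fun c : Code => ¬ (eval c 0).Dom :=
    hre.of_eq fun c => (key c).symm
  exact ComputablePred.halting_problem 0
    (ComputablePred.computable_iff_re_compl_re'.2 ⟨ComputablePred.halting_problem_re 0, hcompl⟩)

end Stmt5Aux

open Stmt5Aux Nat.Partrec.Code in
open Nat.Partrec (Code) in
/-- A computable reduction from E_min(A) to E_min(B) that is well-defined on c.e. sets
preserves the order of the least elements. -/
theorem stmt5 (A B : CompWO) (f : ℕ → ℕ) (hf : Computable f)
    (hred : ∀ x y, Emin A x y ↔ Emin B (f x) (f y))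
    (hwd : ∀ e i, Wce e = Wce i → Wce (f e) = Wce (f i))
    (e i m m' : ℕ) (hm : IsMinOf A (Wce e) m) (hm' : IsMinOf A (Wce i) m')
    (hle : m = m' ∨ A.r m m' = true) :
    ∃ mb mb', IsMinOf B (Wce (f e)) mb ∧ IsMinOf B (Wce (f i)) mb' ∧
      (mb = mb' ∨ B.r mb mb' = true) := by
  haveI hA := A.wo
  haveI hB := B.wo
  have hne : Wce (f e) ≠ ∅ := wce_f_nonempty A B f hf hred hwd e m hm
  have hni : Wce (f i) ≠ ∅ := wce_f_nonempty A B f hf hred hwd i m' hm'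
  obtain ⟨mb, hmb⟩ := exists_isMinOf B (Set.nonempty_iff_ne_empty.2 hne)
  obtain ⟨mb', hmb'⟩ := exists_isMinOf B (Set.nonempty_iff_ne_empty.2 hni)
  refine ⟨mb, mb', hmb, hmb', ?_⟩
  -- case m = m'
  rcases hle with rfl | hlt
  · left
    have hB' : Emin B (f e) (f i) := (hred e i).1 (Or.inr ⟨m, hm, hm'⟩)
    rcases hB' with ⟨h1, _⟩ | ⟨n, hn1, hn2⟩
    · exact absurd h1 hne
    · exact (isMinOf_unique hmb hn1).trans (isMinOf_unique hn2 hmb')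
  -- case m <_A m'
  by_contra hcon
  push_neg at hcon
  obtain ⟨hneq, hnotle⟩ := hcon
  have hgt : B.r mb' mb = true := by
    rcases trichotomous_of (fun a b => B.r a b = true) mb mb' with h | h | h
    · exact absurd h hnotle
    · exact absurd h hneq
    · exact h
  obtain ⟨g, hg, hgW⟩ := exists_g i e
  have key : ∀ c : Code,
      (¬ (eval c 0).Dom) ↔
        ∃ y, y ∈ Wce (f (g c)) ∧ (fun (_ : Code) (y : ℕ) => B.r y mb) c y = true := by
    intro c
    by_cases hdom : (eval c 0).Dom
    · -- Wce (g c) = Wce i ∪ Wce e, whose A-min is m; so min of Wce (f (g c)) is mb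
      have hminGc : IsMinOf A (Wce (g c)) m := by
        constructor
        · rw [hgW]; exact Or.inr ⟨hm.1, hdom⟩
        · intro x hxm
          rw [hgW] at hxm
          rcases hxm with hxm | hxm
          · -- x ∈ Wce i : if x <_A m then x <_A m' contradicting hm'
            by_contra hxb
            have hxt : A.r x m = true := by
              cases hxv : A.r x m
              · exact absurd hxv hxb
              · rfl
            have : A.r x m' = true := trans_of (fun a b => A.r a b = true) hxt hlt
            rw [hm'.2 x hxm] at this
            exact absurd this (by simp)
          · exact hm.2 x hxm.1
      have hBe : Emin B (f (g c)) (f e) := (hred (g c) e).1 (Or.inr ⟨m, hminGc, hm⟩)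
      have hminB : IsMinOf B (Wce (f (g c))) mb := by
        rcases hBe with ⟨_, h2⟩ | ⟨n, hn1, hn2⟩
        · exact absurd h2 hne
        · rwa [isMinOf_unique hn2 hmb] at hn1
      constructor
      · intro h; exact absurd hdom h
      · rintro ⟨y, hy, hyr⟩
        have hyr' : B.r y mb = true := hyr
        rw [hminB.2 y hy] at hyr'
        exact absurd hyr' (by simp)
    · -- Wce (g c) = Wce i, so Wce (f (g c)) = Wce (f i) has min mb' <_B mb
      have hgz : Wce (g c) = Wce i := by
        rw [hgW]
        ext x
        simp [hdom]
      have hWfgc : Wce (f (g c)) = Wce (f i) := hwd (g c) i hgz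
      refine ⟨fun _ => ⟨mb', ?_, hgt⟩, fun _ => hdom⟩
      rw [hWfgc]; exact hmb'.1
  have hre : REPred fun c : Code =>
      ∃ y, y ∈ Wce ((fun c => f (g c)) c) ∧ (fun (_ : Code) (y : ℕ) => B.r y mb) c y = true :=
    rePred_exists _ (hf.comp hg) _ (B.comp.comp Computable.snd (Computable.const mb)).to₂
  have hcompl : REPred fun c : Code => ¬ (eval c 0).Dom :=
    hre.of_eq fun c => (key c).symm
  exact absurd
    (ComputablePred.computable_iff_re_compl_re'.2 ⟨ComputablePred.halting_problem_re 0, hcompl⟩)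
    (ComputablePred.halting_problem 0)
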